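/- Let V be a vector space over a field, and let B₁, B₂ : V × V → V be bilinear alternating maps. Let (H_i)_{i≥0} be a sequence in V satisfying the Lenard recursion B₂(H_i, f) = −B₁(H_{i+1}, f) for all f ∈ V and all i ≥ 0 (no anchoring condition is assumed). Then B₁(H_i, H_j) = 0 and B₂(H_i, H_j) = 0 for all i, j ≥ 0. -/
import Mathlib


/-- the members of a single (not necessarily anchored) formal
λ-family are in involution with respect to both brackets. -/
theorem lenard_family_commutes
    {K V : Type*} [Field K] [AddCommGroup V] [Module K V]
    (B₁ B₂ : V →ₗ[K] V →ₗ[K] V)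
    (halt₁ : ∀ f, B₁ f f = 0) (halt₂ : ∀ f, B₂ f f = 0)
    (H : ℕ → V)
    (hrec : ∀ i f, B₂ (H i) f = - B₁ (H (i + 1)) f) :
    ∀ i j, B₁ (H i) (H j) = 0 ∧ B₂ (H i) (H j) = 0 := by
  -- alternating implies skew-symmetric
  have hskew : ∀ (B : V →ₗ[K] V →ₗ[K] V), (∀ f, B f f = 0) →
      ∀ f g, B f g = - B g f := by
    intro B hB f g
    have h := hB (f + g)
    simp only [map_add, LinearMap.add_apply, hB f, hB g, zero_add, add_zero] at h
    exact eq_neg_of_add_eq_zero_left (by rw [add_comm]; exact h)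
  -- the key shift identity
  have hshift : ∀ i j, B₁ (H (i + 1)) (H j) = B₁ (H i) (H (j + 1)) := by
    intro i j
    have h1 : B₁ (H (i + 1)) (H j) = - B₂ (H i) (H j) := by
      rw [hrec i (H j), neg_neg]
    have h2 : B₁ (H i) (H (j + 1)) = B₂ (H j) (H i) := by
      rw [hskew B₁ halt₁, hrec j (H i)]
    rw [h1, h2, hskew B₂ halt₂ (H i) (H j), neg_neg]
  -- hence B₁ (H i) (H j) depends only on i + j
  have hsum : ∀ n i j, B₁ (H (i + n)) (H j) = B₁ (H i) (H (j + n)) := by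
    intro n
    induction n with
    | zero => intro i j; rfl
    | succ n ih =>
      intro i j
      have := hshift (i + n) j
      calc B₁ (H (i + (n + 1))) (H j) = B₁ (H (i + n + 1)) (H j) := by ring_nf
        _ = B₁ (H (i + n)) (H (j + 1)) := hshift (i + n) j
        _ = B₁ (H i) (H (j + 1 + n)) := ih i (j + 1)
        _ = B₁ (H i) (H (j + (n + 1))) := by ring_nf
  have hcanon : ∀ i j, B₁ (H i) (H j) = B₁ (H 0) (H (i + j)) := by
    intro i j
    have := hsum i 0 j
    simpa [Nat.add_comm] using this
  -- B₁ (H 0) (H m) = 0 for all m, by parity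
  have hzero : ∀ m, B₁ (H 0) (H m) = 0 := by
    intro m
    rcases Nat.even_or_odd m with ⟨k, hk⟩ | ⟨k, hk⟩
    · have := hcanon k k
      rw [halt₁] at this
      rw [hk, ← this.symm]
    · -- m = 2k+1 : B₁ (H 0) (H (2k+1)) = B₁ (H (k+1)) (H k) = - B₂ (H k) (H k) = 0
      have h1 : B₁ (H (k + 1)) (H k) = B₁ (H 0) (H m) := by
        rw [hcanon (k + 1) k, hk]; ring_nf
      have h2 : B₁ (H (k + 1)) (H k) = 0 := by
        have := hrec k (H k)
        rw [halt₂] at this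
        have h3 := this.symm
        rwa [neg_eq_zero] at h3
      rw [← h1, h2]
  have hB₁ : ∀ i j, B₁ (H i) (H j) = 0 := by
    intro i j; rw [hcanon i j, hzero]
  intro i j
  refine ⟨hB₁ i j, ?_⟩
  rw [hrec i (H j), hB₁ (i + 1) j, neg_zero]
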